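/- Let (g,B) be a finite-dimensional quadratic Lie algebra over a field of characteristic 0 with a ℤ/2-grading g = k⊕p such that k and p are B-orthogonal. Let ν : k → 𝒲(p⊕p*,ω) be the Lie algebra homomorphism ν(x) = Σ_i [x,z_i] z_i* (for a basis {z_i} of p with dual basis {z_i*} ⊂ p*), and ν(Ω(k)) = Σ_k ν(w_k)ν(w^k) for a basis {w_k} of k with B-dual basis {w^k}. If B([p,p],[p,p]) ≠ {0}, then the degree-4 component (η(ν(Ω(k))))₄ is nonzero in S⁴(p⊕p*). -/

import Mathlib

noncomputable section

/-- The defining relation of the Weyl algebra of a symplectic form `ω`. -/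
def weylRel (R : Type*) [CommRing R] (U : Type*) [AddCommGroup U] [Module R U]
    (ω : U →ₗ[R] U →ₗ[R] R) : TensorAlgebra R U → TensorAlgebra R U → Prop :=
  fun a b => ∃ u w : U,
    a = TensorAlgebra.ι R u * TensorAlgebra.ι R w ∧
    b = TensorAlgebra.ι R w * TensorAlgebra.ι R u + algebraMap R _ (ω u w)

/-- The Weyl algebra of `(U, ω)`. -/
abbrev WeylAlg (R : Type*) [CommRing R] (U : Type*) [AddCommGroup U] [Module R U]
    (ω : U →ₗ[R] U →ₗ[R] R) := RingQuot (weylRel R U ω)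

/-- The canonical linear map `U → 𝒲(U,ω)`. -/
def weylι (R : Type*) [CommRing R] (U : Type*) [AddCommGroup U] [Module R U]
    (ω : U →ₗ[R] U →ₗ[R] R) : U →ₗ[R] WeylAlg R U ω :=
  (RingQuot.mkAlgHom R (weylRel R U ω)).toLinearMap ∘ₗ TensorAlgebra.ι R

/-- The canonical symplectic form on `p ⊕ p*`: `ω(p,p) = ω(p*,p*) = 0`, `ω(α,v) = α(v)`. -/
def sympForm (R : Type*) [CommRing R] (V : Type*) [AddCommGroup V] [Module R V] :
    (V × Module.Dual R V) →ₗ[R] (V × Module.Dual R V) →ₗ[R] R :=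
  LinearMap.mk₂ R (fun u w => u.2 w.1 - w.2 u.1)
    (by intro m₁ m₂ n; simp; ring)
    (by intro c m n; simp; ring)
    (by intro m n₁ n₂; simp; ring)
    (by intro c m n; simp; ring)

/-- The image of a vector `v ∈ p` in the Weyl algebra `𝒲(p ⊕ p*, ω)`. -/
def wVec (R : Type*) [CommRing R] (V : Type*) [AddCommGroup V] [Module R V] (v : V) :
    WeylAlg R (V × Module.Dual R V) (sympForm R V) :=
  weylι R (V × Module.Dual R V) (sympForm R V) (v, 0)

/-- The image of a functional `φ ∈ p*` in the Weyl algebra `𝒲(p ⊕ p*, ω)`. -/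
def wDual (R : Type*) [CommRing R] (V : Type*) [AddCommGroup V] [Module R V]
    (φ : Module.Dual R V) : WeylAlg R (V × Module.Dual R V) (sympForm R V) :=
  weylι R (V × Module.Dual R V) (sympForm R V) (0, φ)

/-! ### Auxiliary results -/

lemma weyl_comm (R : Type*) [CommRing R] (U : Type*) [AddCommGroup U] [Module R U]
    (ω : U →ₗ[R] U →ₗ[R] R) (u v : U) :
    weylι R U ω u * weylι R U ω v =
      weylι R U ω v * weylι R U ω u + algebraMap R _ (ω u v) := by
  have h := RingQuot.mkAlgHom_rel R (s := weylRel R U ω)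
    (x := TensorAlgebra.ι R u * TensorAlgebra.ι R v)
    (y := TensorAlgebra.ι R v * TensorAlgebra.ι R u + algebraMap R _ (ω u v))
    ⟨u, v, rfl, rfl⟩
  simpa [weylι, map_mul, map_add, AlgHom.commutes] using h

section filtration
variable {𝕜 : Type*} [Field 𝕜] {I : Type*} {W : Type*} [Ring W] [Algebra 𝕜 W] (e : I → W)

/-- Span of products of at most `n` of the generators `e i`. -/
def Fmod (n : ℕ) : Submodule 𝕜 W :=
  Submodule.span 𝕜 {x | ∃ l : List I, l.length ≤ n ∧ (l.map e).prod = x}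

lemma Fmod_mono {m n : ℕ} (h : m ≤ n) : (Fmod e m : Submodule 𝕜 W) ≤ Fmod e n :=
  Submodule.span_mono (fun _ ⟨l, hl, he⟩ => ⟨l, hl.trans h, he⟩)

lemma mul_Fmod {n : ℕ} (a : I) {x : W} (hx : x ∈ (Fmod e n : Submodule 𝕜 W)) :
    e a * x ∈ (Fmod e (n+1) : Submodule 𝕜 W) := by
  induction hx using Submodule.span_induction with
  | mem y hy =>
      obtain ⟨l, hl, rfl⟩ := hy
      exact Submodule.subset_span ⟨a :: l, by simpa using Nat.succ_le_succ hl, by simp⟩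
  | zero => simp [(Fmod e (n+1) : Submodule 𝕜 W).zero_mem]
  | add y z _ _ hy hz => rw [mul_add]; exact add_mem hy hz
  | smul c y _ hy => rw [mul_smul_comm]; exact Submodule.smul_mem _ c hy

lemma perm_diff (hcomm : ∀ a b : I, ∃ r : 𝕜, e a * e b = e b * e a + algebraMap 𝕜 W r)
    {l₁ l₂ : List I} (h : l₁.Perm l₂) : ∀ n : ℕ, l₁.length ≤ n + 2 →
    (l₁.map e).prod - (l₂.map e).prod ∈ (Fmod e n : Submodule 𝕜 W) := by
  induction h with
  | nil => intro n _; simp [(Fmod e n : Submodule 𝕜 W).zero_mem]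
  | @cons a t₁ t₂ h ih =>
      intro n hn
      match n with
      | 0 =>
          have ht : t₁.length ≤ 1 := by simpa using hn
          have heq : t₂ = t₁ := by
            match t₁, ht, h with
            | [], _, h => exact h.symm.eq_nil
            | [x], _, h => exact (List.singleton_perm.mp h).symm
          subst heq
          simp [(Fmod e 0 : Submodule 𝕜 W).zero_mem]
      | (m+1) =>
          have := ih m (by simpa using Nat.le_of_succ_le_succ hn)
          have h2 := mul_Fmod e a this
          simpa [mul_sub] using h2
  | swap x y t =>
      intro n hn
      obtain ⟨r, hr⟩ := hcomm x y
      have hP : ((t.map e)).prod ∈ (Fmod e n : Submodule 𝕜 W) :=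
        Submodule.subset_span ⟨t, by
          simpa using Nat.le_of_succ_le_succ (Nat.le_of_succ_le_succ hn), rfl⟩
      have key : (e y * (e x * (t.map e).prod)) - (e x * (e y * (t.map e).prod))
          = (-r) • (t.map e).prod := by
        have h2 : e y * e x = e x * e y - algebraMap 𝕜 W r := by
          rw [hr, add_sub_cancel_right]
        rw [← mul_assoc, ← mul_assoc, h2, sub_mul, Algebra.smul_def, map_neg, neg_mul]
        abel
      simpa [key] using Submodule.smul_mem _ (-r) hP
  | trans h₁ h₂ ih₁ ih₂ =>
      intro n hn
      have e1 := ih₁ n hn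
      have e2 := ih₂ n (h₁.length_eq ▸ hn)
      simpa using add_mem e1 e2
end filtration

lemma polar {𝕜 : Type*} [Field 𝕜] [CharZero 𝕜] {L : Type*} [LieRing L] [LieAlgebra 𝕜 L]
    (B : L →ₗ[𝕜] L →ₗ[𝕜] 𝕜)
    (hBsymm : ∀ x y, B x y = B y x)
    (hBinv : ∀ x y z, B ⁅x, y⁆ z = B x ⁅y, z⁆)
    (p : Submodule 𝕜 L)
    (hsq : ∀ x ∈ p, ∀ y ∈ p, B ⁅x, y⁆ ⁅x, y⁆ = 0) :
    ∀ a ∈ p, ∀ b ∈ p, ∀ c ∈ p, ∀ d ∈ p, B ⁅a, b⁆ ⁅c, d⁆ = 0 := by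
  have h1 : ∀ x ∈ p, ∀ y ∈ p, ∀ u ∈ p, B ⁅x, y⁆ ⁅u, y⁆ = 0 := by
    intro x hx y hy u hu
    have h := hsq (x + u) (p.add_mem hx hu) y hy
    have hexp : B ⁅x + u, y⁆ ⁅x + u, y⁆ =
        B ⁅x,y⁆ ⁅x,y⁆ + B ⁅u,y⁆ ⁅u,y⁆ + 2 * B ⁅x,y⁆ ⁅u,y⁆ := by
      rw [add_lie]
      simp only [map_add, LinearMap.add_apply]
      rw [hBsymm ⁅u,y⁆ ⁅x,y⁆]
      ring
    rw [hexp, hsq x hx y hy, hsq u hu y hy] at h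
    have h2 : (2:𝕜) ≠ 0 := two_ne_zero
    have : (2:𝕜) * B ⁅x,y⁆ ⁅u,y⁆ = 0 := by linear_combination h
    exact (mul_eq_zero.mp this).resolve_left h2
  have h2 : ∀ x ∈ p, ∀ y ∈ p, ∀ u ∈ p, ∀ t ∈ p,
      B ⁅x, y⁆ ⁅u, t⁆ = - B ⁅x, t⁆ ⁅u, y⁆ := by
    intro x hx y hy u hu t ht
    have h := h1 x hx (y + t) (p.add_mem hy ht) u hu
    rw [lie_add, lie_add] at h
    simp only [map_add, LinearMap.add_apply] at h
    rw [h1 x hx y hy u hu, h1 x hx t ht u hu] at h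
    linear_combination h
  have h3 : ∀ a b c d : L, B ⁅a,b⁆ ⁅c,d⁆ = B ⁅a,c⁆ ⁅b,d⁆ - B ⁅a,d⁆ ⁅b,c⁆ := by
    intro a b c d
    have e1 : B ⁅a,b⁆ ⁅c,d⁆ = B a ⁅b, ⁅c,d⁆⁆ := hBinv a b ⁅c,d⁆
    have e2 : ⁅b, ⁅c,d⁆⁆ = ⁅⁅b,c⁆, d⁆ + ⁅c, ⁅b,d⁆⁆ := leibniz_lie b c d
    have e3 : B a ⁅⁅b,c⁆, d⁆ = - B ⁅a,d⁆ ⁅b,c⁆ := by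
      rw [← hBinv a ⁅b,c⁆ d]
      have h4 : ⁅a, ⁅b,c⁆⁆ = - ⁅⁅b,c⁆, a⁆ := (lie_skew _ _).symm
      rw [h4]
      simp only [map_neg, LinearMap.neg_apply]
      rw [hBinv ⁅b,c⁆ a d, hBsymm]
    have e4 : B a ⁅c, ⁅b,d⁆⁆ = B ⁅a,c⁆ ⁅b,d⁆ := (hBinv a c ⁅b,d⁆).symm
    rw [e1, e2, map_add, e3, e4]
    ring
  intro a ha b hb c hc d hd
  have key : ∀ x ∈ p, ∀ y ∈ p, ∀ u ∈ p, ∀ t ∈ p,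
      B ⁅x,y⁆ ⁅u,t⁆ = -2 * B ⁅x,t⁆ ⁅y,u⁆ := by
    intro x hx y hy u hu t ht
    have ha3 := h3 x y u t
    have hb2 := h2 x hx u hu y hy t ht
    rw [hb2] at ha3
    linear_combination ha3
  have k1 := key a ha b hb c hc d hd
  have k2 := key a ha d hd b hb c hc
  have hanti : B ⁅a,c⁆ ⁅d,b⁆ = - B ⁅a,c⁆ ⁅b,d⁆ := by
    have h6 : (⁅d,b⁆:L) = -⁅b,d⁆ := (lie_skew d b).symm
    rw [h6, map_neg]
  have k3 := h2 a ha c hc b hb d hd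
  have hX : (3:𝕜) * B ⁅a,d⁆ ⁅b,c⁆ = 0 := by linear_combination k2 - 2*hanti + 2*k3
  linear_combination k1 - (2/3 : 𝕜) * hX

set_option maxHeartbeats 4000000 in
/-- For a `ℤ/2`-graded quadratic Lie algebra `g = k ⊕ p`, if
`B([p,p],[p,p]) ≠ {0}` then the degree-4 component of `η(ν(Ω(k)))` is nonzero in
`S⁴(p ⊕ p*)`.  Here `S(p ⊕ p*)` is modelled by polynomials in the basis variables
`z_i, z_i*` and `Q` is the symmetrization map, with inverse `η`. -/
theorem statement4
    (𝕜 : Type*) [Field 𝕜] [CharZero 𝕜]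
    (L : Type*) [LieRing L] [LieAlgebra 𝕜 L] [FiniteDimensional 𝕜 L]
    (B : L →ₗ[𝕜] L →ₗ[𝕜] 𝕜)
    (hBsymm : ∀ x y, B x y = B y x)
    (hBnondeg : ∀ x, (∀ y, B x y = 0) → x = 0)
    (hBinv : ∀ x y z, B ⁅x, y⁆ z = B x ⁅y, z⁆)
    (k p : Submodule 𝕜 L) (hcompl : IsCompl k p)
    (hkk : ∀ x ∈ k, ∀ y ∈ k, ⁅x, y⁆ ∈ k)
    (hkp : ∀ x ∈ k, ∀ y ∈ p, ⁅x, y⁆ ∈ p)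
    (hpp : ∀ x ∈ p, ∀ y ∈ p, ⁅x, y⁆ ∈ k)
    (horth : ∀ x ∈ k, ∀ y ∈ p, B x y = 0)
    (ιk ιp : Type) [Fintype ιk] [Fintype ιp]
    [DecidableEq ιk] [DecidableEq ιp]
    (w : Module.Basis ιk 𝕜 ↥k) (w' : ιk → ↥k)
    (hw : ∀ i j, B ((w i : L)) ((w' j : L)) = if i = j then 1 else 0)
    (z : Module.Basis ιp 𝕜 ↥p) (z' : ιp → ↥p)
    (hz : ∀ i j, B ((z i : L)) ((z' j : L)) = if i = j then 1 else 0)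
    -- the Lie algebra map `ν : k → 𝒲(p⊕p*,ω)`, `ν(x) = Σ_i [x,z_i] z_i*`
    (ν : ↥k → WeylAlg 𝕜 (↥p × Module.Dual 𝕜 ↥p) (sympForm 𝕜 ↥p))
    (hν : ∀ x : ↥k, ν x = ∑ i,
      wVec 𝕜 ↥p ⟨⁅(x : L), (z i : L)⁆, hkp _ x.2 _ (z i).2⟩ * wDual 𝕜 ↥p (z.coord i))
    (νΩk : WeylAlg 𝕜 (↥p × Module.Dual 𝕜 ↥p) (sympForm 𝕜 ↥p))
    (hνΩk : νΩk = ∑ j, ν (w j) * ν (w' j))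
    -- the symmetrization map `Q : S(p⊕p*) → 𝒲(p⊕p*,ω)`, with inverse `η`
    (Q : MvPolynomial (ιp ⊕ ιp) 𝕜 ≃ₗ[𝕜]
      WeylAlg 𝕜 (↥p × Module.Dual 𝕜 ↥p) (sympForm 𝕜 ↥p))
    (hQ : ∀ (m : ℕ) (c : Fin m → ιp ⊕ ιp),
      Q (∏ i, MvPolynomial.X (c i)) =
        (m.factorial : 𝕜)⁻¹ • ∑ σ : Equiv.Perm (Fin m),
          (List.ofFn fun i => Sum.elim (fun a => wVec 𝕜 ↥p (z a))
            (fun a => wDual 𝕜 ↥p (z.coord a)) (c (σ i))).prod)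
    -- `B([p,p],[p,p]) ≠ {0}`
    (hppB : ∃ a ∈ p, ∃ b ∈ p, ∃ c ∈ p, ∃ d ∈ p, B ⁅a, b⁆ ⁅c, d⁆ ≠ 0) :
    MvPolynomial.homogeneousComponent 4 (Q.symm νΩk) ≠ 0 := by
  classical
  set e : ιp ⊕ ιp → WeylAlg 𝕜 (↥p × Module.Dual 𝕜 ↥p) (sympForm 𝕜 ↥p) :=
    Sum.elim (fun a => wVec 𝕜 ↥p (z a)) (fun a => wDual 𝕜 ↥p (z.coord a)) with hedef
  set vec : ιp ⊕ ιp → (↥p × Module.Dual 𝕜 ↥p) :=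
    Sum.elim (fun a => ((z a : ↥p), (0 : Module.Dual 𝕜 ↥p)))
      (fun a => ((0 : ↥p), z.coord a)) with hvecdef
  have he : ∀ c, e c = weylι 𝕜 (↥p × Module.Dual 𝕜 ↥p) (sympForm 𝕜 ↥p) (vec c) := by
    rintro (a|a) <;> rfl
  have hcomm : ∀ a b, ∃ r : 𝕜, e a * e b = e b * e a + algebraMap 𝕜 _ r := by
    intro a b
    exact ⟨sympForm 𝕜 ↥p (vec a) (vec b), by
      rw [he, he]; exact weyl_comm 𝕜 _ (sympForm 𝕜 ↥p) (vec a) (vec b)⟩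
  set Low : Submodule 𝕜 (WeylAlg 𝕜 (↥p × Module.Dual 𝕜 ↥p) (sympForm 𝕜 ↥p)) :=
    Submodule.map (Q.toLinearMap) (MvPolynomial.restrictTotalDegree (ιp ⊕ ιp) 𝕜 2) with hLowdef
  -- small symmetrization identities
  have hQ0 : Q (1 : MvPolynomial (ιp ⊕ ιp) 𝕜) = 1 := by
    have h := hQ 0 (fun i => i.elim0)
    rw [Fin.prod_univ_zero] at h
    rw [h]
    rw [Finset.sum_congr rfl (fun σ _ => by rw [List.ofFn_zero, List.prod_nil])]
    simp
  have hQ1 : ∀ c, Q (MvPolynomial.X c : MvPolynomial (ιp ⊕ ιp) 𝕜) = e c := by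
    intro c
    have h := hQ 1 (fun _ => c)
    simpa [hedef] using h
  have hQ2 : ∀ a b, Q (MvPolynomial.X a * MvPolynomial.X b : MvPolynomial (ιp ⊕ ιp) 𝕜) =
      (2 : 𝕜)⁻¹ • (e a * e b + e b * e a) := by
    intro a b
    have h := hQ 2 ![a, b]
    have huniv : (Finset.univ : Finset (Equiv.Perm (Fin 2))) = {1, Equiv.swap 0 1} := by decide
    rw [huniv, Finset.sum_insert (by decide), Finset.sum_singleton] at h
    rw [Fin.prod_univ_two] at h
    simpa [hedef, List.ofFn_succ] using h
  have hone : (1 : WeylAlg 𝕜 (↥p × Module.Dual 𝕜 ↥p) (sympForm 𝕜 ↥p)) ∈ Low := by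
    refine ⟨1, ?_, hQ0⟩
    simp only [SetLike.mem_coe, MvPolynomial.mem_restrictTotalDegree]
    simp
  have hF2 : (Fmod e 2 : Submodule 𝕜 _) ≤ Low := by
    rw [Fmod, Submodule.span_le]
    rintro x ⟨l, hl, rfl⟩
    match l, hl with
    | [], _ =>
        simpa using hone
    | [a], _ =>
        refine SetLike.mem_coe.mpr ⟨MvPolynomial.X a, ?_, by simpa using hQ1 a⟩
        rw [SetLike.mem_coe, MvPolynomial.mem_restrictTotalDegree, MvPolynomial.totalDegree_X]
        omega
    | [a, b], _ =>
        obtain ⟨r, hr⟩ := hcomm a b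
        have hprod : e a * e b =
            Q (MvPolynomial.X a * MvPolynomial.X b + MvPolynomial.C (r/2)) := by
          rw [map_add, hQ2 a b, hr]
          have hC : Q (MvPolynomial.C (r/2) : MvPolynomial (ιp ⊕ ιp) 𝕜) = (r/2) • 1 := by
            rw [← hQ0, ← map_smul]
            congr 1
            rw [MvPolynomial.smul_eq_C_mul, mul_one]
          rw [hC, smul_add, smul_add]
          rw [Algebra.algebraMap_eq_smul_one]
          match_scalars <;> field_simp <;> ring
        refine SetLike.mem_coe.mpr ⟨MvPolynomial.X a * MvPolynomial.X b
          + MvPolynomial.C (r/2), ?_, by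
            simp only [LinearEquiv.coe_coe]; rw [← hprod]; simp⟩
        rw [SetLike.mem_coe, MvPolynomial.mem_restrictTotalDegree]
        refine le_trans (MvPolynomial.totalDegree_add _ _) ?_
        simp only [sup_le_iff]
        constructor
        · refine le_trans (MvPolynomial.totalDegree_mul _ _) ?_
          simp [MvPolynomial.totalDegree_X]
        · simp [MvPolynomial.totalDegree_C]
  -- main degree-4 statement
  have hmain : ∀ c : Fin 4 → ιp ⊕ ιp,
      (List.ofFn fun i => e (c i)).prod - Q (∏ i, MvPolynomial.X (c i)) ∈ Low := by
    intro c
    have h4 := hQ 4 c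
    have hperm : ∀ σ : Equiv.Perm (Fin 4),
        (List.ofFn fun i => e (c (σ i))).prod - (List.ofFn fun i => e (c i)).prod
          ∈ (Fmod e 2 : Submodule 𝕜 _) := by
      intro σ
      have hp : (List.ofFn ((c ∘ σ))).Perm (List.ofFn c) := Equiv.Perm.ofFn_comp_perm σ c
      have hd := perm_diff e hcomm hp 2 (by simp)
      simpa [List.map_ofFn, Function.comp] using hd
    have hsum : (∑ σ : Equiv.Perm (Fin 4), (List.ofFn fun i => e (c (σ i))).prod)
        - (24 : 𝕜) • (List.ofFn fun i => e (c i)).prod ∈ (Fmod e 2 : Submodule 𝕜 _) := by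
      have hs : (∑ σ : Equiv.Perm (Fin 4), (List.ofFn fun i => e (c (σ i))).prod)
          - (24 : 𝕜) • (List.ofFn fun i => e (c i)).prod
          = ∑ σ : Equiv.Perm (Fin 4), ((List.ofFn fun i => e (c (σ i))).prod
              - (List.ofFn fun i => e (c i)).prod) := by
        rw [Finset.sum_sub_distrib, Finset.sum_const, Finset.card_univ,
          Fintype.card_perm, Fintype.card_fin]
        rw [show Nat.factorial 4 = 24 from rfl, ← Nat.cast_smul_eq_nsmul 𝕜 24]
        norm_num
      rw [hs]
      exact Submodule.sum_mem _ (fun σ _ => hperm σ)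
    have heq : (List.ofFn fun i => e (c i)).prod - Q (∏ i, MvPolynomial.X (c i))
        = -((24:𝕜)⁻¹ • (∑ σ : Equiv.Perm (Fin 4), (List.ofFn fun i => e (c (σ i))).prod
            - (24 : 𝕜) • (List.ofFn fun i => e (c i)).prod)) := by
      rw [h4]
      have : (Nat.factorial 4 : 𝕜) = 24 := by norm_num [Nat.factorial]
      rw [this, smul_sub, smul_smul]
      rw [inv_mul_cancel₀ (by norm_num : (24:𝕜) ≠ 0), one_smul]
      abel
    rw [heq]
    exact Submodule.neg_mem _ (hF2 (Submodule.smul_mem _ _ hsum))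
  -- expansion of `wVec` in the basis
  have hwv : ∀ v : ↥p, wVec 𝕜 ↥p v = ∑ m, z.repr v m • e (Sum.inl m) := by
    intro v
    have h1 : wVec 𝕜 ↥p v
        = (weylι 𝕜 (↥p × Module.Dual 𝕜 ↥p) (sympForm 𝕜 ↥p)
            ∘ₗ LinearMap.inl 𝕜 ↥p (Module.Dual 𝕜 ↥p)) v := rfl
    have h2 := congrArg (weylι 𝕜 (↥p × Module.Dual 𝕜 ↥p) (sympForm 𝕜 ↥p)
            ∘ₗ LinearMap.inl 𝕜 ↥p (Module.Dual 𝕜 ↥p)) (z.sum_repr v)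
    rw [map_sum] at h2
    simp only [map_smul] at h2
    rw [h1, ← h2]
    rfl
  -- expansion of `ν`
  have hνx : ∀ x : ↥k, ν x = ∑ i, ∑ m,
      z.repr ⟨⁅(x:L), (z i : L)⁆, hkp _ x.2 _ (z i).2⟩ m •
        (e (Sum.inl m) * e (Sum.inr i)) := by
    intro x
    rw [hν x]
    refine Finset.sum_congr rfl (fun i _ => ?_)
    have : wDual 𝕜 ↥p (z.coord i) = e (Sum.inr i) := rfl
    rw [this, hwv, Finset.sum_mul]
    exact Finset.sum_congr rfl (fun m _ => smul_mul_assoc _ _ _)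
  set c1 : ιk → ιp → ιp → 𝕜 := fun j i m =>
    z.repr ⟨⁅((w j : ↥k) : L), (z i : L)⁆, hkp _ (w j).2 _ (z i).2⟩ m with hc1
  set c2 : ιk → ιp → ιp → 𝕜 := fun j l n =>
    z.repr ⟨⁅((w' j : ↥k) : L), (z l : L)⁆, hkp _ (w' j).2 _ (z l).2⟩ n with hc2
  have hprod : ∀ j, ν (w j) * ν (w' j) = ∑ i, ∑ l, ∑ m, ∑ n,
      (c1 j i m * c2 j l n) •
        (e (Sum.inl m) * (e (Sum.inr i) * (e (Sum.inl n) * e (Sum.inr l)))) := by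
    intro j
    rw [hνx (w j), hνx (w' j), Finset.sum_mul_sum]
    refine Finset.sum_congr rfl (fun i _ => ?_)
    refine Finset.sum_congr rfl (fun l _ => ?_)
    rw [Finset.sum_mul_sum]
    refine Finset.sum_congr rfl (fun m _ => ?_)
    refine Finset.sum_congr rfl (fun n _ => ?_)
    rw [smul_mul_assoc, mul_smul_comm, smul_smul, mul_assoc]
  have hνΩexp : νΩk = ∑ j, ∑ i, ∑ l, ∑ m, ∑ n,
      (c1 j i m * c2 j l n) •
        (e (Sum.inl m) * (e (Sum.inr i) * (e (Sum.inl n) * e (Sum.inr l)))) := by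
    rw [hνΩk]; exact Finset.sum_congr rfl (fun j _ => hprod j)
  set P : MvPolynomial (ιp ⊕ ιp) 𝕜 := ∑ j, ∑ i, ∑ l, ∑ m, ∑ n,
      (c1 j i m * c2 j l n) •
        (MvPolynomial.X (Sum.inl m) * (MvPolynomial.X (Sum.inr i) *
          (MvPolynomial.X (Sum.inl n) * MvPolynomial.X (Sum.inr l)))) with hP
  have hsub : ∀ {α : Type} [Fintype α]
      (f g : α → WeylAlg 𝕜 (↥p × Module.Dual 𝕜 ↥p) (sympForm 𝕜 ↥p)),
      (∀ a, f a - g a ∈ Low) → (∑ a, f a) - (∑ a, g a) ∈ Low := by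
    intro α _ f g h
    rw [← Finset.sum_sub_distrib]
    exact Submodule.sum_mem _ (fun a _ => h a)
  have hdiff : νΩk - Q P ∈ Low := by
    have hQP : Q P = ∑ j, ∑ i, ∑ l, ∑ m, ∑ n,
        (c1 j i m * c2 j l n) •
          Q (MvPolynomial.X (Sum.inl m) * (MvPolynomial.X (Sum.inr i) *
            (MvPolynomial.X (Sum.inl n) * MvPolynomial.X (Sum.inr l)))) := by
      rw [hP]
      simp only [map_sum, map_smul]
    rw [hνΩexp, hQP]
    refine hsub _ _ (fun j => hsub _ _ (fun i => hsub _ _ (fun l => hsub _ _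
      (fun m => hsub _ _ (fun n => ?_)))))
    beta_reduce
    have h := hmain ![Sum.inl m, Sum.inr i, Sum.inl n, Sum.inr l]
    have hl : (List.ofFn fun i2 => e (![Sum.inl m, Sum.inr i, Sum.inl n, Sum.inr l] i2)).prod
        = e (Sum.inl m) * (e (Sum.inr i) * (e (Sum.inl n) * e (Sum.inr l))) := by
      simp [List.ofFn_succ]
    have hx : (∏ i2, MvPolynomial.X (![Sum.inl m, Sum.inr i, Sum.inl n, Sum.inr l] i2)
        : MvPolynomial (ιp ⊕ ιp) 𝕜)
        = MvPolynomial.X (Sum.inl m) * (MvPolynomial.X (Sum.inr i) *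
            (MvPolynomial.X (Sum.inl n) * MvPolynomial.X (Sum.inr l))) := by
      rw [Fin.prod_univ_four]
      simp [mul_assoc]
    rw [hl, hx] at h
    have h2 := Submodule.smul_mem Low (c1 j i m * c2 j l n) h
    rw [smul_sub] at h2
    exact h2
  -- P is homogeneous of degree 4
  have hPhom : P ∈ MvPolynomial.homogeneousSubmodule (ιp ⊕ ιp) 𝕜 4 := by
    rw [hP]
    refine Submodule.sum_mem _ (fun j _ => Submodule.sum_mem _ (fun i _ =>
      Submodule.sum_mem _ (fun l _ => Submodule.sum_mem _ (fun m _ =>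
        Submodule.sum_mem _ (fun n _ => Submodule.smul_mem _ _ ?_)))))
    rw [MvPolynomial.mem_homogeneousSubmodule]
    have h1 := (MvPolynomial.isHomogeneous_X 𝕜 (Sum.inl m : ιp ⊕ ιp)).mul
      ((MvPolynomial.isHomogeneous_X 𝕜 (Sum.inr i : ιp ⊕ ιp)).mul
        ((MvPolynomial.isHomogeneous_X 𝕜 (Sum.inl n : ιp ⊕ ιp)).mul
          (MvPolynomial.isHomogeneous_X 𝕜 (Sum.inr l : ιp ⊕ ιp))))
    norm_num at h1
    exact h1
  -- decompose Q.symm νΩk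
  obtain ⟨rlow, hrlow, hQr⟩ := hdiff
  have hsymmQ : Q.symm νΩk = P + rlow := by
    apply Q.injective
    rw [Q.apply_symm_apply, map_add]
    have : Q.toLinearMap rlow = Q rlow := rfl
    rw [this] at hQr
    rw [hQr]
    abel
  have hcomp : MvPolynomial.homogeneousComponent 4 (Q.symm νΩk) = P := by
    rw [hsymmQ, map_add]
    rw [MvPolynomial.homogeneousComponent_of_mem hPhom]
    rw [MvPolynomial.homogeneousComponent_eq_zero 4 rlow ?deg]
    · simp
    case deg =>
      have := (MvPolynomial.mem_restrictTotalDegree (ιp ⊕ ιp) 2 rlow).mp hrlow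
      omega
  -- choose x0, y0 in p with B⁅x0,y0⁆⁅x0,y0⁆ ≠ 0
  have hsq' : ∃ x0 ∈ p, ∃ y0 ∈ p, B ⁅x0, y0⁆ ⁅x0, y0⁆ ≠ 0 := by
    by_contra hcon
    push_neg at hcon
    obtain ⟨a, ha, b, hb, c, hc, d, hd, hne⟩ := hppB
    exact hne (polar B hBsymm hBinv p hcon a ha b hb c hc d hd)
  obtain ⟨x0L, hx0, y0L, hy0, hB0⟩ := hsq'
  set x0 : ↥p := ⟨x0L, hx0⟩ with hx0def
  set y : L := ⁅x0L, y0L⁆ with hydef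
  set val : ιp ⊕ ιp → 𝕜 :=
    Sum.elim (fun m => B y0L ((z m : ↥p) : L)) (fun i => z.repr x0 i) with hval
  -- the two linear factors evaluate to B x y
  have hfac : ∀ x : ↥k, (∑ i, ∑ m,
      z.repr ⟨⁅(x:L), (z i : L)⁆, hkp _ x.2 _ (z i).2⟩ m *
        (val (Sum.inl m) * val (Sum.inr i))) = B (x : L) y := by
    intro x
    have hinner : ∀ i, (∑ m,
        z.repr ⟨⁅(x:L), (z i : L)⁆, hkp _ x.2 _ (z i).2⟩ m * val (Sum.inl m))
        = B y0L ⁅(x:L), (z i : L)⁆ := by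
      intro i
      have hf := congrArg ((B y0L) ∘ₗ p.subtype)
        (z.sum_repr ⟨⁅(x:L), (z i : L)⁆, hkp _ x.2 _ (z i).2⟩)
      rw [map_sum] at hf
      simp only [map_smul] at hf
      rw [show (B y0L) ⁅(x:L), (z i : L)⁆
        = ((B y0L) ∘ₗ p.subtype) ⟨⁅(x:L), (z i : L)⁆, hkp _ x.2 _ (z i).2⟩ from rfl]
      rw [← hf]
      refine Finset.sum_congr rfl (fun m _ => ?_)
      simp [hval, smul_eq_mul]
    have hstep : (∑ i, ∑ m,
        z.repr ⟨⁅(x:L), (z i : L)⁆, hkp _ x.2 _ (z i).2⟩ m *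
          (val (Sum.inl m) * val (Sum.inr i)))
        = ∑ i, B y0L ⁅(x:L), (z i : L)⁆ * val (Sum.inr i) := by
      refine Finset.sum_congr rfl (fun i _ => ?_)
      rw [← hinner i, Finset.sum_mul]
      exact Finset.sum_congr rfl (fun m _ => by ring)
    rw [hstep]
    have hf2 := congrArg ((B y0L) ∘ₗ (((LieAlgebra.ad 𝕜 L) (x:L)) ∘ₗ p.subtype))
      (z.sum_repr x0)
    rw [map_sum] at hf2
    simp only [map_smul] at hf2
    have hstep2 : (∑ i, B y0L ⁅(x:L), (z i : L)⁆ * val (Sum.inr i))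
        = B y0L ⁅(x:L), x0L⁆ := by
      have hx0c : ((x0 : ↥p) : L) = x0L := rfl
      rw [← hx0c]
      rw [show (B y0L) ⁅(x:L), ((x0 : ↥p) : L)⁆
        = ((B y0L) ∘ₗ (((LieAlgebra.ad 𝕜 L) (x:L)) ∘ₗ p.subtype)) x0 from rfl]
      rw [← hf2]
      refine Finset.sum_congr rfl (fun i _ => ?_)
      simp [hval, smul_eq_mul, LieAlgebra.ad_apply, mul_comm]
    rw [hstep2, hBsymm y0L _, hBinv (x:L) x0L y0L]
  -- evaluate P
  have heval : MvPolynomial.eval val P = ∑ j,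
      (∑ i, ∑ m, c1 j i m * (val (Sum.inl m) * val (Sum.inr i))) *
      (∑ l, ∑ n, c2 j l n * (val (Sum.inl n) * val (Sum.inr l))) := by
    rw [hP, map_sum]
    refine Finset.sum_congr rfl (fun j _ => ?_)
    rw [Finset.sum_mul_sum, map_sum]
    refine Finset.sum_congr rfl (fun i _ => ?_)
    rw [map_sum]
    refine Finset.sum_congr rfl (fun l _ => ?_)
    rw [Finset.sum_mul_sum, map_sum]
    refine Finset.sum_congr rfl (fun m _ => ?_)
    rw [map_sum]
    refine Finset.sum_congr rfl (fun n _ => ?_)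
    rw [MvPolynomial.smul_eq_C_mul]
    simp only [map_mul, MvPolynomial.eval_C, MvPolynomial.eval_X]
    ring
  have heval2 : MvPolynomial.eval val P = ∑ j,
      B ((w j : ↥k) : L) y * B ((w' j : ↥k) : L) y := by
    rw [heval]
    refine Finset.sum_congr rfl (fun j _ => ?_)
    rw [hfac (w j), hfac (w' j)]
  -- final pairing identity
  set yk : ↥k := ⟨y, hpp _ hx0 _ hy0⟩ with hyk
  have hw'y : ∀ j, B ((w' j : ↥k) : L) y = w.repr yk j := by
    intro j
    have hf := congrArg ((B.flip ((w' j : ↥k) : L)) ∘ₗ k.subtype) (w.sum_repr yk)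
    rw [map_sum] at hf
    simp only [map_smul] at hf
    have hyc : ((yk : ↥k) : L) = y := rfl
    rw [hBsymm]
    rw [show (B y) ((w' j : ↥k) : L)
      = ((B.flip ((w' j : ↥k) : L)) ∘ₗ k.subtype) yk from rfl]
    rw [← hf]
    rw [Finset.sum_congr rfl (fun t _ => by
      rw [show ((B.flip ((w' j : ↥k) : L)) ∘ₗ k.subtype) (w t)
        = B ((w t : ↥k) : L) ((w' j : ↥k) : L) from rfl, hw t j])]
    simp
  have hfinal : ∑ j, B ((w j : ↥k) : L) y * B ((w' j : ↥k) : L) y = B y y := by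
    rw [Finset.sum_congr rfl (fun j _ => by rw [hw'y j])]
    have hf := congrArg ((B.flip y) ∘ₗ k.subtype) (w.sum_repr yk)
    rw [map_sum] at hf
    simp only [map_smul] at hf
    have : ((B.flip y) ∘ₗ k.subtype) yk = B y y := rfl
    rw [this] at hf
    rw [← hf]
    refine Finset.sum_congr rfl (fun j _ => ?_)
    rw [show ((B.flip y) ∘ₗ k.subtype) (w j) = B ((w j : ↥k) : L) y from rfl]
    rw [smul_eq_mul]
    ring
  -- conclusion
  rw [hcomp]
  intro hP0
  rw [hP0] at heval2
  rw [hfinal] at heval2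
  simp only [map_zero] at heval2
  exact hB0 heval2.symm
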